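/- Let H₀ be a finite-rank free ℤ-module, K a commutative ring with unit, H = H₀ ⊗ K, and T̂ the completed tensor algebra on H. Identify Λ²H₀ with the submodule of H₀^{⊗2} spanned by elements X'Y' − Y'X'. If v'₀ ∈ Λ²H₀ is primitive as an element of H₀^{⊗2}, and v₀ = v'₀ ⊗ 1 ∈ H^{⊗2}, then {u ∈ T̂ : v₀u = uv₀} = K[[v₀]]. -/

import Mathlib

/-! We model the completed tensor algebra `T̂ = ∏ₘ H^{⊗m}` of a free module `H`
with basis `ι` concretely: an element of `T̂` is a function assigning to each
word in the alphabet `ι` its coefficient.  Addition and scalar multiplication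
are pointwise, and multiplication is the convolution over splittings of a word.
The free `ℤ`-module `H₀` is modelled as `ι →₀ ℤ`, and `H₀^{⊗2}` as
`(ι × ι) →₀ ℤ`; the submodule `Λ²H₀ ⊆ H₀^{⊗2}` spanned by the elements
`X'Y' − Y'X'` is exactly the submodule of antisymmetric tensors. -/

/-- The completed tensor algebra on the free module with basis `ι`,
coefficients in `K`. -/
abbrev NCSeries (ι K : Type*) := List ι → K

variable {ι K : Type*} [CommRing K]

/-- The unit of `T̂`. -/
def oneNC : NCSeries ι K := fun w =>
  match w with
  | [] => 1
  | _ => 0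

/-- The multiplication of `T̂`. -/
def mulNC (f g : NCSeries ι K) : NCSeries ι K := fun w =>
  ∑ k ∈ Finset.range (w.length + 1), f (w.take k) * g (w.drop k)

/-- Powers in `T̂`. -/
def pwNC (X : NCSeries ι K) : ℕ → NCSeries ι K
  | 0 => oneNC
  | n + 1 => mulNC X (pwNC X n)

/-- The element of `T̂` of degree 2 determined by an element `v'₀` of
`H₀^{⊗2} = (ι × ι) →₀ ℤ`, i.e. the image `v₀ = v'₀ ⊗ 1 ∈ H^{⊗2} ⊆ T̂`. -/
def degreeTwo (v' : ι × ι →₀ ℤ) : NCSeries ι K := fun w =>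
  match w with
  | [i, j] => (v' (i, j) : K)
  | _ => 0

/-- The formal power series `Σₙ aₙ v₀ⁿ ∈ K[[v₀]]` (the sum is componentwise
finite whenever `v₀` has vanishing constant term). -/
def seriesInNC (a : ℕ → K) (X : NCSeries ι K) : NCSeries ι K := fun w =>
  ∑ n ∈ Finset.range (w.length + 1), a n * pwNC X n w

-- auxiliary defs
def auxFlat (P : List (ι × ι)) : List ι := P.flatMap fun p => [p.1, p.2]

def auxCprod (c : ι → ι → K) (P : List (ι × ι)) : K := (P.map fun p => c p.1 p.2).prod

def auxPairUp : List ι → List (ι × ι)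
  | i :: j :: w => (i, j) :: auxPairUp w
  | _ => []

def auxSumP [Fintype ι] : ℕ → (List (ι × ι) → K) → K
  | 0, F => F []
  | t + 1, F => ∑ p : ι × ι, auxSumP t fun P => F (p :: P)

@[simp] lemma auxFlat_nil : auxFlat ([] : List (ι × ι)) = [] := rfl
@[simp] lemma auxFlat_cons (a b : ι) (P : List (ι × ι)) :
    auxFlat ((a, b) :: P) = a :: b :: auxFlat P := rfl
@[simp] lemma auxFlat_append (P Q : List (ι × ι)) :
    auxFlat (P ++ Q) = auxFlat P ++ auxFlat Q := List.flatMap_append ..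

@[simp] lemma auxCprod_nil (c : ι → ι → K) : auxCprod c [] = 1 := rfl
@[simp] lemma auxCprod_cons (c : ι → ι → K) (a b : ι) (P : List (ι × ι)) :
    auxCprod c ((a, b) :: P) = c a b * auxCprod c P := rfl
@[simp] lemma auxCprod_append (c : ι → ι → K) (P Q : List (ι × ι)) :
    auxCprod c (P ++ Q) = auxCprod c P * auxCprod c Q := by
  simp [auxCprod]
@[simp] lemma auxCprod_reverse (c : ι → ι → K) (P : List (ι × ι)) :
    auxCprod c P.reverse = auxCprod c P := by
  simp [auxCprod, List.prod_reverse]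

@[simp] lemma auxPairUp_nil : auxPairUp ([] : List ι) = [] := rfl
@[simp] lemma auxPairUp_cons_cons (i j : ι) (w : List ι) :
    auxPairUp (i :: j :: w) = (i, j) :: auxPairUp w := rfl

lemma auxFlat_pairUp (w : List ι) (h : Even w.length) : auxFlat (auxPairUp w) = w := by
  induction w using auxPairUp.induct with
  | case1 i j w ih =>
      obtain ⟨t, ht⟩ := h
      simp only [List.length_cons] at ht
      simp [ih ⟨t - 1, by omega⟩]
  | case2 w hw =>
      cases w with
      | nil => rfl
      | cons x t =>
        cases t with
        | nil => simp at h
        | cons y t' => exact absurd rfl (hw x y t')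

lemma auxPairUp_length (w : List ι) (s : ℕ) (h : w.length = 2 * s) :
    (auxPairUp w).length = s := by
  induction w using auxPairUp.induct generalizing s with
  | case1 i j w ih =>
      simp only [List.length_cons] at h
      simp only [auxPairUp_cons_cons, List.length_cons, ih (s - 1) (by omega)]
      omega
  | case2 w hw =>
      cases w with
      | nil => simp at h ⊢; omega
      | cons x t =>
        cases t with
        | nil => simp at h; omega
        | cons y t' => exact absurd rfl (hw x y t')

lemma auxPairUp_append_pair (w : List ι) (h : Even w.length) (x y : ι) :
    auxPairUp (w ++ [x, y]) = auxPairUp w ++ [(x, y)] := by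
  induction w using auxPairUp.induct with
  | case1 i j w ih =>
      obtain ⟨t, ht⟩ := h
      simp only [List.length_cons] at ht
      simp [ih ⟨t - 1, by omega⟩]
  | case2 w hw =>
      cases w with
      | nil => rfl
      | cons x t =>
        cases t with
        | nil => simp at h
        | cons y t' => exact absurd rfl (hw x y t')

lemma degreeTwo_eq_zero (v' : ι × ι →₀ ℤ) (l : List ι) (h : l.length ≠ 2) :
    (degreeTwo v' : NCSeries ι K) l = 0 := by
  match l with
  | [] => rfl
  | [x] => rfl
  | [x, y] => simp at h
  | x :: y :: z :: r => rfl

@[simp] lemma degreeTwo_pair (v' : ι × ι →₀ ℤ) (i j : ι) :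
    (degreeTwo v' : NCSeries ι K) [i, j] = ((v' (i, j) : ℤ) : K) := rfl

lemma mulNC_degreeTwo_left (v' : ι × ι →₀ ℤ) (u : NCSeries ι K) (i j : ι) (w : List ι) :
    mulNC (degreeTwo v') u (i :: j :: w) = ((v' (i, j) : ℤ) : K) * u w := by
  rw [mulNC]
  rw [Finset.sum_eq_single 2]
  · simp
  · intro k hk hk2
    simp only [Finset.mem_range, List.length_cons] at hk
    rw [degreeTwo_eq_zero, zero_mul]
    simp only [List.length_take, List.length_cons]
    omega
  · intro h
    simp at h

lemma mulNC_degreeTwo_right (v' : ι × ι →₀ ℤ) (u : NCSeries ι K) (w : List ι) (a b : ι) :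
    mulNC u (degreeTwo v') (w ++ [a, b]) = u w * ((v' (a, b) : ℤ) : K) := by
  rw [mulNC]
  rw [Finset.sum_eq_single w.length]
  · rw [List.take_left, List.drop_left]
    simp
  · intro k hk hk2
    rw [degreeTwo_eq_zero _ _ (by
      rw [List.length_drop]
      simp only [Finset.mem_range, List.length_append, List.length_cons, List.length_nil] at hk ⊢
      omega), mul_zero]
  · intro h
    simp at h

lemma mulNC_degreeTwo_left_short (v' : ι × ι →₀ ℤ) (u : NCSeries ι K) (z : List ι)
    (h : z.length ≤ 1) : mulNC (degreeTwo v') u z = 0 := by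
  rw [mulNC]
  apply Finset.sum_eq_zero
  intro k hk
  rw [degreeTwo_eq_zero, zero_mul]
  rw [List.length_take]
  simp only [Finset.mem_range] at hk
  omega

lemma mulNC_degreeTwo_right_short (v' : ι × ι →₀ ℤ) (u : NCSeries ι K) (z : List ι)
    (h : z.length ≤ 1) : mulNC u (degreeTwo v') z = 0 := by
  rw [mulNC]
  apply Finset.sum_eq_zero
  intro k hk
  rw [degreeTwo_eq_zero _ _ (by rw [List.length_drop]; simp only [Finset.mem_range] at hk; omega),
    mul_zero]

def auxC (v' : ι × ι →₀ ℤ) : ι → ι → K := fun i j => ((v' (i, j) : ℤ) : K)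

def auxVprod (v' : ι × ι →₀ ℤ) (w : List ι) : K := auxCprod (auxC v') (auxPairUp w)

@[simp] lemma auxVprod_nil (v' : ι × ι →₀ ℤ) : (auxVprod v' [] : K) = 1 := rfl

@[simp] lemma auxVprod_cons_cons (v' : ι × ι →₀ ℤ) (i j : ι) (w : List ι) :
    (auxVprod v' (i :: j :: w) : K) = auxC v' i j * auxVprod v' w := rfl

lemma pwNC_degreeTwo (v' : ι × ι →₀ ℤ) (n : ℕ) (w : List ι) :
    pwNC (degreeTwo v' : NCSeries ι K) n w =
      if w.length = 2 * n then auxVprod v' w else 0 := by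
  induction n generalizing w with
  | zero =>
    cases w with
    | nil => simp [pwNC, oneNC]
    | cons x t => simp [pwNC, oneNC]
  | succ n ih =>
    match w with
    | [] =>
      rw [pwNC, mulNC_degreeTwo_left_short v' _ _ (by simp), if_neg (by simp)]
    | [x] =>
      rw [pwNC, mulNC_degreeTwo_left_short v' _ _ (by simp),
        if_neg (by simp only [List.length_cons, List.length_nil]; omega)]
    | i :: j :: w =>
      rw [pwNC, mulNC_degreeTwo_left, ih]
      by_cases h : w.length = 2 * n
      · rw [if_pos h, if_pos (by simp only [List.length_cons]; omega)]
        simp [auxC]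
      · rw [if_neg h, if_neg (by simp only [List.length_cons]; omega), mul_zero]

lemma seriesInNC_degreeTwo_even (v' : ι × ι →₀ ℤ) (a : ℕ → K) (w : List ι) (s : ℕ)
    (h : w.length = 2 * s) :
    seriesInNC a (degreeTwo v' : NCSeries ι K) w = a s * auxVprod v' w := by
  rw [seriesInNC, Finset.sum_eq_single s]
  · rw [pwNC_degreeTwo, if_pos h]
  · intro n hn hn2
    rw [pwNC_degreeTwo, if_neg (by omega), mul_zero]
  · intro hs
    simp only [Finset.mem_range] at hs
    omega

lemma seriesInNC_degreeTwo_odd (v' : ι × ι →₀ ℤ) (a : ℕ → K) (w : List ι)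
    (h : ¬ Even w.length) :
    seriesInNC a (degreeTwo v' : NCSeries ι K) w = 0 := by
  rw [seriesInNC]
  apply Finset.sum_eq_zero
  intro n hn
  rw [pwNC_degreeTwo, if_neg (fun hc => h ⟨n, by omega⟩), mul_zero]

def auxLprod (lam : ι × ι → K) (P : List (ι × ι)) : K := (P.map lam).prod

@[simp] lemma auxLprod_nil (lam : ι × ι → K) : auxLprod lam [] = 1 := rfl
@[simp] lemma auxLprod_cons (lam : ι × ι → K) (p : ι × ι) (P : List (ι × ι)) :
    auxLprod lam (p :: P) = lam p * auxLprod lam P := rfl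

section core

variable [Fintype ι] (c : ι → ι → K) (lam : ι × ι → K)

lemma auxSumP_congr (t : ℕ) (F G : List (ι × ι) → K)
    (h : ∀ P, P.length = t → F P = G P) : auxSumP t F = auxSumP t G := by
  induction t generalizing F G with
  | zero => exact h [] rfl
  | succ t ih =>
    rw [auxSumP, auxSumP]
    exact Finset.sum_congr rfl fun p _ => ih _ _ fun P hP => h (p :: P) (by simp [hP])

lemma auxSumP_mul_const (t : ℕ) (F : List (ι × ι) → K) (x : K) :
    auxSumP t (fun P => F P * x) = auxSumP t F * x := by
  induction t generalizing F with
  | zero => rfl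
  | succ t ih =>
    rw [auxSumP, auxSumP, Finset.sum_mul]
    exact Finset.sum_congr rfl fun p _ => ih _

lemma auxSumP_const_mul (t : ℕ) (F : List (ι × ι) → K) (x : K) :
    auxSumP t (fun P => x * F P) = x * auxSumP t F := by
  induction t generalizing F with
  | zero => rfl
  | succ t ih =>
    rw [auxSumP, auxSumP, Finset.mul_sum]
    exact Finset.sum_congr rfl fun p _ => ih _

variable (hlam : ∑ p : ι × ι, lam p * c p.1 p.2 = 1)
include hlam

lemma auxSumP_one (t : ℕ) :
    auxSumP t (fun P => auxLprod lam P * auxCprod c P) = 1 := by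
  induction t with
  | zero => simp [auxSumP]
  | succ t ih =>
    rw [auxSumP]
    calc (∑ p : ι × ι, auxSumP t fun P => auxLprod lam (p :: P) * auxCprod c (p :: P))
        = ∑ p : ι × ι, auxSumP t
            (fun P => (lam p * c p.1 p.2) * (auxLprod lam P * auxCprod c P)) := by
          refine Finset.sum_congr rfl fun p _ => auxSumP_congr _ _ _ fun P _ => ?_
          rcases p with ⟨a, b⟩
          simp [auxLprod, auxCprod]
          ring
      _ = ∑ p : ι × ι, (lam p * c p.1 p.2) * 1 := by
          refine Finset.sum_congr rfl fun p _ => ?_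
          rw [auxSumP_const_mul, ih]
      _ = 1 := by simpa using hlam

/-- the "sum against an arbitrary linear expression" trick:
`x = auxSumP t (fun P => Λ(P) * (C(P) * x))`. -/
lemma auxSumP_absorb (t : ℕ) (x : K) :
    auxSumP t (fun P => auxLprod lam P * (auxCprod c P * x)) = x := by
  have h1 : (fun P => auxLprod lam P * (auxCprod c P * x)) =
      fun P => (auxLprod lam P * auxCprod c P) * x := by
    funext P; ring
  rw [h1, auxSumP_mul_const, auxSumP_one c lam hlam, one_mul]

end core

section rel

variable [Fintype ι] (c : ι → ι → K) (lam : ι × ι → K) (u : NCSeries ι K)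

section IRsec
variable (hR2 : ∀ (i j a b : ι) (w : List ι),
    c i j * u (w ++ [a, b]) = u (i :: j :: w) * c a b)
include hR2

lemma auxIR : ∀ (P Q : List (ι × ι)) (w : List ι), P.length = Q.length →
    auxCprod c P * u (w ++ auxFlat Q.reverse) =
      u (auxFlat P.reverse ++ w) * auxCprod c Q := by
  intro P
  induction P with
  | nil =>
    intro Q w h
    rw [List.length_nil] at h
    rw [List.eq_nil_of_length_eq_zero h.symm]
    simp
  | cons p P' ih =>
    rintro (_ | ⟨q, Q'⟩) w h
    · simp at h
    · rcases p with ⟨i, j⟩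
      rcases q with ⟨a, b⟩
      simp only [List.length_cons, Nat.add_right_cancel_iff] at h
      have e1 : auxFlat ((a, b) :: Q').reverse = auxFlat Q'.reverse ++ [a, b] := by
        simp
      have e2 : auxFlat ((i, j) :: P').reverse = auxFlat P'.reverse ++ [i, j] := by
        simp
      rw [e1, e2]
      have h2 := hR2 i j a b (w ++ auxFlat Q'.reverse)
      have h3 := ih Q' (i :: j :: w) h
      calc auxCprod c ((i, j) :: P') * u (w ++ (auxFlat Q'.reverse ++ [a, b]))
          = auxCprod c P' * (c i j * u ((w ++ auxFlat Q'.reverse) ++ [a, b])) := by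
            rw [auxCprod_cons, List.append_assoc]; ring
        _ = auxCprod c P' * (u ((i :: j :: w) ++ auxFlat Q'.reverse) * c a b) := by
            rw [h2]; rfl
        _ = (auxCprod c P' * u ((i :: j :: w) ++ auxFlat Q'.reverse)) * c a b := by ring
        _ = u (auxFlat P'.reverse ++ (i :: j :: w)) * auxCprod c Q' * c a b := by rw [h3]
        _ = u ((auxFlat P'.reverse ++ [i, j]) ++ w) * auxCprod c ((a, b) :: Q') := by
            rw [auxCprod_cons, List.append_assoc]
            have hl : ([i, j] ++ w) = i :: j :: w := rfl
            rw [hl]; ring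

end IRsec

end rel

set_option linter.unusedSectionVars false

section rel2

variable [Fintype ι] (c : ι → ι → K) (lam : ι × ι → K) (u : NCSeries ι K)
variable (hlam : ∑ p : ι × ι, lam p * c p.1 p.2 = 1)
variable (hdiag : ∀ i : ι, c i i = 0)
variable (hskew : ∀ i j : ι, c j i = - c i j)
variable (hR2 : ∀ (i j a b : ι) (w : List ι),
    c i j * u (w ++ [a, b]) = u (i :: j :: w) * c a b)
variable (hR1 : ∀ i j k : ι, c i j * u [k] = u [i] * c j k)

include hlam in
/-- absorb `1 = ∑ lam * c` into a single `Fintype` sum -/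
lemma aux_absorb_single (x : K) (F : ι × ι → K)
    (hF : ∀ p : ι × ι, c p.1 p.2 * x = F p) :
    x = ∑ p : ι × ι, lam p * F p := by
  calc x = (∑ p : ι × ι, lam p * c p.1 p.2) * x := by rw [hlam, one_mul]
    _ = ∑ p : ι × ι, lam p * F p := by
        rw [Finset.sum_mul]
        exact Finset.sum_congr rfl fun p _ => by rw [mul_assoc, hF p]

include hlam hdiag hR2

lemma aux_qq_right (q : ι) (w : List ι) : u (w ++ [q, q]) = 0 := by
  rw [aux_absorb_single c lam hlam (u (w ++ [q, q])) (fun _ => 0)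
    (fun p => by rw [hR2 p.1 p.2 q q w, hdiag, mul_zero])]
  simp

lemma aux_qq_left (q : ι) (w : List ι) : u (q :: q :: w) = 0 := by
  rw [aux_absorb_single c lam hlam (u (q :: q :: w)) (fun _ => 0)
    (fun p => by rw [mul_comm, ← hR2 q q p.1 p.2 w, hdiag, zero_mul])]
  simp

end rel2

section rel3

variable [Fintype ι] (c : ι → ι → K) (lam : ι × ι → K) (u : NCSeries ι K)
variable (hlam : ∑ p : ι × ι, lam p * c p.1 p.2 = 1)
variable (hdiag : ∀ i : ι, c i i = 0)
variable (hskew : ∀ i j : ι, c j i = - c i j)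
variable (hR2 : ∀ (i j a b : ι) (w : List ι),
    c i j * u (w ++ [a, b]) = u (i :: j :: w) * c a b)
variable (hR1 : ∀ i j k : ι, c i j * u [k] = u [i] * c j k)

/-- coefficient of `u` on even words: `u w = A * ∏ c(pairs of w)`. -/
def auxA (t : ℕ) : K := auxSumP t fun P => auxLprod lam P * u (auxFlat P.reverse)

def auxG (t : ℕ) (k : ι) : K :=
  auxSumP t fun P => auxLprod lam P * u (auxFlat P.reverse ++ [k])

def auxH (t : ℕ) (k : ι) : K :=
  auxSumP t fun P => auxLprod lam P * u (k :: auxFlat P.reverse)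

include hlam hR2

lemma aux_even (w : List ι) (s : ℕ) (h : w.length = 2 * s) :
    u w = auxA lam u s * auxCprod c (auxPairUp w) := by
  have hw : auxFlat ((auxPairUp w).reverse).reverse = w := by
    rw [List.reverse_reverse]; exact auxFlat_pairUp w ⟨s, by omega⟩
  have hlen : ((auxPairUp w).reverse).length = s := by
    rw [List.length_reverse]; exact auxPairUp_length w s h
  conv_lhs => rw [← auxSumP_absorb c lam hlam s (u w)]
  rw [auxA, ← auxSumP_mul_const]
  apply auxSumP_congr
  intro P hP
  have := auxIR c u hR2 P ((auxPairUp w).reverse) [] (by rw [hP, hlen])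
  rw [hw, List.nil_append, List.append_nil] at this
  rw [this, auxCprod_reverse]
  ring

lemma aux_F1 (t : ℕ) (k : ι) (Q : List (ι × ι)) (hQ : Q.length = t) :
    u (k :: auxFlat Q.reverse) = auxG lam u t k * auxCprod c Q := by
  conv_lhs => rw [← auxSumP_absorb c lam hlam t (u (k :: auxFlat Q.reverse))]
  rw [auxG, ← auxSumP_mul_const]
  apply auxSumP_congr
  intro P hP
  have := auxIR c u hR2 P Q [k] (by rw [hP, hQ])
  have e : [k] ++ auxFlat Q.reverse = k :: auxFlat Q.reverse := rfl
  rw [e] at this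
  rw [this]
  ring

lemma aux_F2 (t : ℕ) (k : ι) (P : List (ι × ι)) (hP : P.length = t) :
    u (auxFlat P.reverse ++ [k]) = auxCprod c P * auxH lam u t k := by
  conv_lhs => rw [← auxSumP_absorb c lam hlam t (u (auxFlat P.reverse ++ [k]))]
  rw [auxH, ← auxSumP_const_mul]
  apply auxSumP_congr
  intro Q hQ
  have := auxIR c u hR2 P Q [k] (by rw [hP, hQ])
  have e : [k] ++ auxFlat Q.reverse = k :: auxFlat Q.reverse := rfl
  rw [e] at this
  calc auxLprod lam Q * (auxCprod c Q * u (auxFlat P.reverse ++ [k]))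
      = auxLprod lam Q * (u (auxFlat P.reverse ++ [k]) * auxCprod c Q) := by ring
    _ = auxLprod lam Q * (auxCprod c P * u (k :: auxFlat Q.reverse)) := by rw [← this]
    _ = auxCprod c P * (auxLprod lam Q * u (k :: auxFlat Q.reverse)) := by ring

lemma aux_F3 (t : ℕ) (k : ι) : auxG lam u t k = auxH lam u t k := by
  rw [auxG]
  calc (auxSumP t fun P => auxLprod lam P * u (auxFlat P.reverse ++ [k]))
      = auxSumP t fun P => auxLprod lam P *
          (auxCprod c P * auxH lam u t k) := by
        exact auxSumP_congr _ _ _ fun P hP => by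
          rw [aux_F2 c lam u hlam hR2 t k P hP]
    _ = auxH lam u t k := auxSumP_absorb c lam hlam t _

end rel3

section rel4

variable [Fintype ι] (c : ι → ι → K) (lam : ι × ι → K) (u : NCSeries ι K)
variable (hlam : ∑ p : ι × ι, lam p * c p.1 p.2 = 1)
variable (hdiag : ∀ i : ι, c i i = 0)
variable (hskew : ∀ i j : ι, c j i = - c i j)
variable (hR2 : ∀ (i j a b : ι) (w : List ι),
    c i j * u (w ++ [a, b]) = u (i :: j :: w) * c a b)
variable (hR1 : ∀ i j k : ι, c i j * u [k] = u [i] * c j k)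

include hlam hR2 hR1 in
lemma aux_F4 (t : ℕ) (i j k : ι) :
    c i j * auxH lam u t k = auxH lam u t i * c j k := by
  cases t with
  | zero =>
    have e0 : ∀ m : ι, auxH lam u 0 m = u [m] := fun m => by
      simp [auxH, auxSumP]
    rw [e0, e0]
    exact hR1 i j k
  | succ t' =>
    have expand : ∀ m : ι, auxH lam u (t' + 1) m =
        ∑ p : ι × ι, auxSumP t'
          (fun P => auxLprod lam (p :: P) * u (m :: auxFlat (p :: P).reverse)) := by
      intro m; rfl
    rw [expand, Finset.mul_sum]
    have step : ∀ p : ι × ι,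
        c i j * auxSumP t'
            (fun P => auxLprod lam (p :: P) * u (k :: auxFlat (p :: P).reverse)) =
          lam p * c p.1 p.2 * (auxG lam u (t' + 1) i * c j k) := by
      intro p
      rw [← auxSumP_const_mul]
      calc auxSumP t'
            (fun P => c i j * (auxLprod lam (p :: P) * u (k :: auxFlat (p :: P).reverse)))
          = auxSumP t' (fun P => (auxLprod lam P * auxCprod c P) *
              (lam p * (auxG lam u (t' + 1) i * c j k * c p.1 p.2))) := by
            apply auxSumP_congr
            intro P hP
            have e1 : auxFlat (p :: P).reverse = auxFlat P.reverse ++ [p.1, p.2] := by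
              rcases p with ⟨a, b⟩; simp
            have e2 : k :: (auxFlat P.reverse ++ [p.1, p.2]) =
                (k :: auxFlat P.reverse) ++ [p.1, p.2] := rfl
            have h2 := hR2 i j p.1 p.2 (k :: auxFlat P.reverse)
            have e3 : i :: j :: k :: auxFlat P.reverse =
                i :: auxFlat ((P ++ [(j, k)]).reverse) := by simp
            have h4 := aux_F1 c lam u hlam hR2 (t' + 1) i (P ++ [(j, k)]) (by simp [hP])
            rw [e1, auxLprod_cons, e2]
            calc c i j * (lam p * auxLprod lam P *
                  u ((k :: auxFlat P.reverse) ++ [p.1, p.2]))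
                = lam p * auxLprod lam P *
                    (c i j * u ((k :: auxFlat P.reverse) ++ [p.1, p.2])) := by ring
              _ = lam p * auxLprod lam P *
                    (u (i :: j :: k :: auxFlat P.reverse) * c p.1 p.2) := by rw [h2]
              _ = lam p * auxLprod lam P *
                    ((auxG lam u (t' + 1) i * auxCprod c (P ++ [(j, k)])) * c p.1 p.2) := by
                  rw [e3, h4]
              _ = (auxLprod lam P * auxCprod c P) *
                    (lam p * (auxG lam u (t' + 1) i * c j k * c p.1 p.2)) := by
                  rw [auxCprod_append]
                  simp only [auxCprod_cons, auxCprod_nil, mul_one]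
                  ring
        _ = lam p * (auxG lam u (t' + 1) i * c j k * c p.1 p.2) := by
            rw [auxSumP_mul_const, auxSumP_one c lam hlam, one_mul]
        _ = lam p * c p.1 p.2 * (auxG lam u (t' + 1) i * c j k) := by ring
    rw [Finset.sum_congr rfl (fun p _ => step p), ← Finset.sum_mul, hlam, one_mul]
    rw [aux_F3 c lam u hlam hR2, expand]

include hlam hdiag hskew in
lemma aux_g_zero (g : ι → K) (hg : ∀ i j k : ι, c i j * g k = g i * c j k) (k : ι) :
    g k = 0 := by
  have hb : ∀ p q : ι, c p q * (c p q * g k) = 0 := by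
    intro p q
    have h1 : c p q * g k = - (c q p * g k) := by rw [hskew q p]; ring
    calc c p q * (c p q * g k) = - (c p q * (c q p * g k)) := by rw [h1]; ring
      _ = - (c p q * (g q * c p k)) := by rw [hg q p k]
      _ = - ((c p q * g q) * c p k) := by ring
      _ = - ((g p * c q q) * c p k) := by rw [hg p q q]
      _ = 0 := by rw [hdiag, mul_zero, zero_mul, neg_zero]
  let J : Ideal K :=
    { carrier := {x | x * g k = 0}
      add_mem' := fun {a b} ha hb => by
        simp only [Set.mem_setOf_eq] at *
        rw [add_mul, ha, hb, add_zero]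
      zero_mem' := by simp
      smul_mem' := fun r x hx => by
        simp only [Set.mem_setOf_eq, smul_eq_mul] at *
        rw [mul_assoc, hx, mul_zero] }
  have hrad : ∀ p q : ι, c p q ∈ J.radical := by
    intro p q
    refine ⟨2, ?_⟩
    show c p q ^ 2 * g k = 0
    rw [pow_two, mul_assoc]
    exact hb p q
  have h1 : (1 : K) ∈ J.radical := by
    rw [← hlam]
    exact Ideal.sum_mem _ fun p _ => Ideal.mul_mem_left _ _ (hrad p.1 p.2)
  have htop : J = ⊤ := Ideal.radical_eq_top.mp ((Ideal.eq_top_iff_one _).mpr h1)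
  have h2 : (1 : K) ∈ J := htop ▸ Submodule.mem_top
  have h3 : (1 : K) * g k = 0 := h2
  rwa [one_mul] at h3

include hlam hdiag hskew hR2 hR1 in
lemma aux_odd (w : List ι) (t : ℕ) (h : w.length = 2 * t + 1) : u w = 0 := by
  cases w with
  | nil => simp at h
  | cons k w' =>
    simp only [List.length_cons] at h
    have hw' : auxFlat (((auxPairUp w').reverse).reverse) = w' := by
      rw [List.reverse_reverse]; exact auxFlat_pairUp w' ⟨t, by omega⟩
    have hlen : ((auxPairUp w').reverse).length = t := by
      rw [List.length_reverse]; exact auxPairUp_length w' t (by omega)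
    have := aux_F1 c lam u hlam hR2 t k ((auxPairUp w').reverse) hlen
    rw [hw'] at this
    rw [this, aux_F3 c lam u hlam hR2,
      aux_g_zero c lam hlam hdiag hskew (auxH lam u t)
        (fun i j m => aux_F4 c lam u hlam hR2 hR1 t i j m) k, zero_mul]

end rel4

lemma auxVprod_append_pair (v' : ι × ι →₀ ℤ) (w : List ι) (h : Even w.length) (y x : ι) :
    (auxVprod v' (w ++ [y, x]) : K) = auxVprod v' w * auxC v' y x := by
  rw [auxVprod, auxPairUp_append_pair w h, auxCprod_append]
  simp [auxVprod, auxC]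


/-- let `H₀` be a finite-rank free `ℤ`-module (modelled as
`ι →₀ ℤ`, `ι` finite), `K` a commutative ring, and `v'₀ ∈ Λ²H₀ ⊆ H₀^{⊗2}`
(i.e. an antisymmetric tensor) which is primitive as an element of `H₀^{⊗2}`.
Then the centralizer in `T̂` of `v₀ = v'₀ ⊗ 1 ∈ H^{⊗2}` is exactly the ring
`K[[v₀]]` of formal power series in `v₀`. -/
theorem centralizer_primitive_lambdaTwo_eq_powerSeries
    [Fintype ι] (v' : ι × ι →₀ ℤ)
    (hanti : ∀ i j : ι, v' (i, j) = -v' (j, i))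
    (hprim : ∃ φ : (ι × ι →₀ ℤ) →ₗ[ℤ] ℤ, φ v' = 1) :
    {u : NCSeries ι K | mulNC (degreeTwo v') u = mulNC u (degreeTwo v')} =
      {u : NCSeries ι K | ∃ a : ℕ → K, u = seriesInNC a (degreeTwo v')} := by
  obtain ⟨φ, hφ⟩ := hprim
  set c : ι → ι → K := auxC v' with hc
  set lam : ι × ι → K := fun p => ((φ (Finsupp.single p 1) : ℤ) : K) with hlamdef
  have hdiag : ∀ i : ι, c i i = 0 := by
    intro i
    have := hanti i i
    have h0 : v' (i, i) = 0 := by omega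
    simp [hc, auxC, h0]
  have hskew : ∀ i j : ι, c j i = - c i j := by
    intro i j
    simp only [hc, auxC]
    rw [hanti j i]
    push_cast
    ring
  have hlam : ∑ p : ι × ι, lam p * c p.1 p.2 = 1 := by
    have hv : v' = ∑ p : ι × ι, Finsupp.single p (v' p) := by
      ext q
      rw [Finsupp.finset_sum_apply]
      rw [Finset.sum_eq_single q]
      · simp
      · intro p _ hpq
        exact Finsupp.single_eq_of_ne' hpq
      · simp
    have hz : (∑ p : ι × ι, v' p * φ (Finsupp.single p 1)) = 1 := by
      rw [← hφ]
      conv_rhs => rw [hv]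
      rw [map_sum]
      refine Finset.sum_congr rfl fun p _ => ?_
      have : Finsupp.single p (v' p) = (v' p) • Finsupp.single p (1 : ℤ) := by
        rw [Finsupp.smul_single]
        simp
      rw [this, map_smul, smul_eq_mul]
      rw [hφ]
    have := congrArg (fun n : ℤ => (n : K)) hz
    push_cast at this
    rw [← this]
    refine Finset.sum_congr rfl fun p _ => ?_
    simp only [hlamdef, hc, auxC]
    ring
  ext u
  simp only [Set.mem_setOf_eq]
  constructor
  · intro hcomm
    have hR2 : ∀ (i j a b : ι) (w : List ι),
        c i j * u (w ++ [a, b]) = u (i :: j :: w) * c a b := by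
      intro i j a b w
      have h1 := congrFun hcomm (i :: j :: (w ++ [a, b]))
      rw [mulNC_degreeTwo_left] at h1
      have e : i :: j :: (w ++ [a, b]) = (i :: j :: w) ++ [a, b] := rfl
      rw [e, mulNC_degreeTwo_right] at h1
      exact h1
    have hR1 : ∀ i j k : ι, c i j * u [k] = u [i] * c j k := by
      intro i j k
      have h1 := congrFun hcomm [i, j, k]
      rw [mulNC_degreeTwo_left] at h1
      have e : [i, j, k] = [i] ++ [j, k] := rfl
      rw [e, mulNC_degreeTwo_right] at h1
      exact h1
    refine ⟨fun n => auxA lam u n, ?_⟩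
    funext w
    rcases Nat.even_or_odd w.length with he | ho
    · obtain ⟨s, hs⟩ := he
      rw [seriesInNC_degreeTwo_even v' _ w s (by omega)]
      rw [aux_even c lam u hlam hR2 w s (by omega)]
      rfl
    · obtain ⟨t, ht⟩ := ho
      rw [seriesInNC_degreeTwo_odd v' _ w (by rw [← Nat.not_odd_iff_even] at *; tauto)]
      exact aux_odd c lam u hlam hdiag hskew hR2 hR1 w t (by omega)
  · rintro ⟨a, rfl⟩
    funext z
    match z with
    | [] =>
      rw [mulNC_degreeTwo_left_short v' _ _ (by simp),
        mulNC_degreeTwo_right_short v' _ _ (by simp)]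
    | [x] =>
      rw [mulNC_degreeTwo_left_short v' _ _ (by simp),
        mulNC_degreeTwo_right_short v' _ _ (by simp)]
    | i :: j :: w =>
      rw [mulNC_degreeTwo_left]
      rcases w.eq_nil_or_concat with rfl | ⟨l, x, rfl⟩
      · have e : [i, j] = ([] : List ι) ++ [i, j] := rfl
        conv_rhs => rw [e]
        rw [mulNC_degreeTwo_right]
        ring
      · rcases l.eq_nil_or_concat with rfl | ⟨w'', y, rfl⟩
        · have e1 : ([] : List ι).concat x = [x] := rfl
          rw [e1]
          have e : (i :: j :: [x] : List ι) = [i] ++ [j, x] := rfl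
          rw [e, mulNC_degreeTwo_right]
          rw [seriesInNC_degreeTwo_odd v' a _ (by simp)]
          rw [seriesInNC_degreeTwo_odd v' a _ (by simp)]
          ring
        · have e1 : (w''.concat y).concat x = w'' ++ [y, x] := by
            simp
          rw [e1]
          have e : (i :: j :: (w'' ++ [y, x]) : List ι) = (i :: j :: w'') ++ [y, x] := rfl
          rw [e, mulNC_degreeTwo_right]
          rcases Nat.even_or_odd w''.length with he | ho
          · obtain ⟨s, hs⟩ := he
            rw [seriesInNC_degreeTwo_even v' a (w'' ++ [y, x]) (s + 1) (by simp; omega)]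
            rw [seriesInNC_degreeTwo_even v' a (i :: j :: w'') (s + 1) (by simp; omega)]
            rw [auxVprod_append_pair v' w'' ⟨s, by omega⟩ y x, auxVprod_cons_cons]
            show _ * _ = _
            simp only [auxC]
            ring
          · obtain ⟨t, ht⟩ := ho
            rw [seriesInNC_degreeTwo_odd v' a (w'' ++ [y, x]) (by
              simp only [List.length_append, List.length_cons, List.length_nil]
              rw [Nat.not_even_iff_odd]; exact ⟨t + 1, by omega⟩)]
            rw [seriesInNC_degreeTwo_odd v' a (i :: j :: w'') (by
              simp only [List.length_cons]
              rw [Nat.not_even_iff_odd]; exact ⟨t + 1, by omega⟩)]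
            ring
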